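/- Let S : ℝᵈ → ℝᵈ be a continuously differentiable involution (S ∘ S = id), let π : ℝᵈ → [0, ∞) be Lebesgue-integrable, set J(z) := |det DS(z)| (absolute Jacobian determinant of S at z), and define the Metropolis–Hastings acceptance probability α(z) := min{1, π(S(z))·J(z)/π(z)} when π(z) > 0 and α(z) := 1 when π(z) = 0. Then the Metropolis–Hastings kernel with deterministic proposal S, P(z, ·) := α(z)·δ_{S(z)} + (1 − α(z))·δ_z, satisfies detailed balance with respect to the measure π(z)dz: for all Borel sets A, B ⊆ ℝᵈ, ∫_A P(z, B) π(z) dz = ∫_B P(z, A) π(z) dz. -/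

import Mathlib

open Metric MeasureTheory

/-- **Detailed balance of the Metropolis–Hastings kernel with deterministic
involutive proposal.** Let `S` be a `C¹` involution of `ℝᵈ`, `π ≥ 0` Lebesgue
integrable, `J(z) = |det DS(z)|`, and `α(z) = min{1, π(S z)·J(z)/π(z)}` when
`π(z) > 0`, `α(z) = 1` otherwise. Then the kernel
`P(z,·) = α(z) δ_{S(z)} + (1 − α(z)) δ_z` satisfies detailed balance with respect
to `π(z)dz`: for all Borel `A, B`, `∫_A P(z,B) π(z) dz = ∫_B P(z,A) π(z) dz`. -/
theorem metropolis_involution_detailed_balance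
    (d : ℕ)
    (S : EuclideanSpace ℝ (Fin d) → EuclideanSpace ℝ (Fin d))
    (hS : ContDiff ℝ 1 S)
    (hinv : ∀ z, S (S z) = z)
    (π : EuclideanSpace ℝ (Fin d) → ℝ)
    (hπ0 : ∀ z, 0 ≤ π z)
    (hπint : MeasureTheory.Integrable π)
    (J : EuclideanSpace ℝ (Fin d) → ℝ)
    (hJ : ∀ z, J z = |LinearMap.det ((fderiv ℝ S z).toLinearMap)|)
    (α : EuclideanSpace ℝ (Fin d) → ℝ)
    (hα : ∀ z, 0 < π z → α z = min 1 (π (S z) * J z / π z))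
    (hα1 : ∀ z, π z = 0 → α z = 1) :
    ∀ A B : Set (EuclideanSpace ℝ (Fin d)), MeasurableSet A → MeasurableSet B →
      (∫ z in A,
        (α z * B.indicator (fun _ => (1:ℝ)) (S z)
          + (1 - α z) * B.indicator (fun _ => (1:ℝ)) z) * π z)
      = ∫ z in B,
        (α z * A.indicator (fun _ => (1:ℝ)) (S z)
          + (1 - α z) * A.indicator (fun _ => (1:ℝ)) z) * π z := by
  intro A B hA hB
  have hSdiff : Differentiable ℝ S := hS.differentiable one_ne_zero
  have hSmeas : Measurable S := hS.continuous.measurable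
  have hSinj : Function.Injective S := fun a b h => by
    have := congrArg S h; rwa [hinv, hinv] at this
  have hSsurj : Function.Surjective S := fun y => ⟨S y, hinv y⟩
  have hJ' : ∀ z, J z = |(fderiv ℝ S z).det| := hJ
  have hJ0 : ∀ z, 0 ≤ J z := fun z => (hJ z) ▸ abs_nonneg _
  -- Jacobian identity J (S z) * J z = 1
  have hJcomp : ∀ z, J (S z) * J z = 1 := by
    intro z
    have h1 : HasFDerivAt (S ∘ S) ((fderiv ℝ S (S z)).comp (fderiv ℝ S z)) z :=
      (hSdiff (S z)).hasFDerivAt.comp z (hSdiff z).hasFDerivAt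
    have h2 : HasFDerivAt (S ∘ S)
        (ContinuousLinearMap.id ℝ (EuclideanSpace ℝ (Fin d))) z := by
      have hid : S ∘ S = id := funext hinv
      rw [hid]; exact hasFDerivAt_id z
    have heq := h1.unique h2
    have hdet : (fderiv ℝ S (S z)).det * (fderiv ℝ S z).det = 1 := by
      have := congrArg ContinuousLinearMap.det heq
      simpa [ContinuousLinearMap.det, LinearMap.det_comp] using this
    rw [hJ' (S z), hJ' z, ← abs_mul, hdet, abs_one]
  -- the symmetric "min" function
  set m : EuclideanSpace ℝ (Fin d) → ℝ := fun z => min (π z) (π (S z) * J z)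
    with hm_def
  have hm0 : ∀ z, 0 ≤ m z := fun z =>
    le_min (hπ0 z) (mul_nonneg (hπ0 _) (hJ0 z))
  have hmle : ∀ z, m z ≤ π z := fun z => min_le_left _ _
  have hm : ∀ z, α z * π z = m z := by
    intro z
    rcases (hπ0 z).lt_or_eq with hz | hz
    · rw [hα z hz, min_mul_of_nonneg _ _ hz.le, one_mul,
        div_mul_cancel₀ _ hz.ne']
    · rw [hα1 z hz.symm, one_mul]
      show π z = min (π z) (π (S z) * J z)
      rw [← hz]
      exact (min_eq_left (mul_nonneg (hπ0 _) (hJ0 z))).symm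
  have hmJ : ∀ z, m (S z) * J z = m z := by
    intro z
    show min (π (S z)) (π (S (S z)) * J (S z)) * J z = min (π z) (π (S z) * J z)
    rw [hinv z, min_mul_of_nonneg _ _ (hJ0 z), mul_assoc, hJcomp z, mul_one,
      min_comm]
  -- measurability facts
  have hπsm : AEStronglyMeasurable π volume := hπint.1
  have hqmp : Measure.QuasiMeasurePreserving S
      (volume : Measure (EuclideanSpace ℝ (Fin d)))
      (volume : Measure (EuclideanSpace ℝ (Fin d))) := by
    refine ⟨hSmeas, Measure.AbsolutelyContinuous.mk fun T hT hT0 => ?_⟩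
    rw [Measure.map_apply hSmeas hT]
    have himg : S ⁻¹' T = S '' T := by
      ext x
      constructor
      · intro hx; exact ⟨S x, hx, hinv x⟩
      · rintro ⟨y, hy, rfl⟩; rwa [Set.mem_preimage, hinv]
    rw [himg]
    exact addHaar_image_eq_zero_of_differentiableOn_of_addHaar_eq_zero
      volume hSdiff.differentiableOn hT0
  have hπS : AEStronglyMeasurable (fun z => π (S z)) volume :=
    hπsm.comp_quasiMeasurePreserving hqmp
  have hJcont : Continuous J := by
    have h1 : Continuous fun z => |(fderiv ℝ S z).det| :=
      continuous_abs.comp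
        (ContinuousLinearMap.continuous_det.comp (hS.continuous_fderiv one_ne_zero))
    have he : J = fun z => |(fderiv ℝ S z).det| := funext hJ'
    rw [he]; exact h1
  have hmm : AEMeasurable m volume :=
    (hπsm.aemeasurable).min ((hπS.aemeasurable).mul hJcont.aemeasurable)
  -- integrability of the pieces
  have hind01 : ∀ (U : Set (EuclideanSpace ℝ (Fin d))) z,
      U.indicator (fun _ => (1:ℝ)) z = 0 ∨
      U.indicator (fun _ => (1:ℝ)) z = 1 := by
    intro U z
    by_cases h : z ∈ U
    · right; simp [Set.indicator_of_mem h]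
    · left; simp [Set.indicator_of_notMem h]
  have hcross_int : ∀ (U V : Set (EuclideanSpace ℝ (Fin d))),
      MeasurableSet U → MeasurableSet V →
      Integrable (fun z => U.indicator (fun _ => (1:ℝ)) z *
        V.indicator (fun _ => (1:ℝ)) (S z) * m z) := by
    intro U V hU hV
    refine hπint.mono ?_ (Filter.Eventually.of_forall fun z => ?_)
    · exact ((((measurable_const.indicator hU).aemeasurable).mul
        (((measurable_const.indicator hV).comp hSmeas).aemeasurable)).mul
        hmm).aestronglyMeasurable
    · have hb : |m z| ≤ |π z| := by
        rw [abs_of_nonneg (hm0 z), abs_of_nonneg (hπ0 z)]; exact hmle z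
      rcases hind01 U z with h1 | h1 <;> rcases hind01 V (S z) with h2 | h2 <;>
        simp only [Real.norm_eq_abs, h1, h2, one_mul, zero_mul, mul_zero,
          abs_zero] <;> first | exact abs_nonneg _ | exact hb
  have hdiag_int : ∀ (U V : Set (EuclideanSpace ℝ (Fin d))),
      MeasurableSet U → MeasurableSet V →
      Integrable (fun z => U.indicator (fun _ => (1:ℝ)) z *
        V.indicator (fun _ => (1:ℝ)) z * (π z - m z)) := by
    intro U V hU hV
    refine hπint.mono ?_ (Filter.Eventually.of_forall fun z => ?_)
    · exact ((((measurable_const.indicator hU).aemeasurable).mul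
        ((measurable_const.indicator hV).aemeasurable)).mul
        (hπsm.aemeasurable.sub hmm)).aestronglyMeasurable
    · have hb : |π z - m z| ≤ |π z| := by
        rw [abs_of_nonneg (sub_nonneg.2 (hmle z)), abs_of_nonneg (hπ0 z)]
        linarith [hm0 z]
      rcases hind01 U z with h1 | h1 <;> rcases hind01 V z with h2 | h2 <;>
        simp only [Real.norm_eq_abs, h1, h2, one_mul, zero_mul, mul_zero,
          abs_zero] <;> first | exact abs_nonneg _ | exact hb
  -- decomposition of the detailed-balance integral
  have hrw : ∀ (U V : Set (EuclideanSpace ℝ (Fin d))),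
      MeasurableSet U → MeasurableSet V →
      (∫ z in U, (α z * V.indicator (fun _ => (1:ℝ)) (S z)
          + (1 - α z) * V.indicator (fun _ => (1:ℝ)) z) * π z)
      = (∫ z, U.indicator (fun _ => (1:ℝ)) z *
            V.indicator (fun _ => (1:ℝ)) (S z) * m z)
        + ∫ z, U.indicator (fun _ => (1:ℝ)) z *
            V.indicator (fun _ => (1:ℝ)) z * (π z - m z) := by
    intro U V hU hV
    rw [← integral_indicator hU,
      ← integral_add (hcross_int U V hU hV) (hdiag_int U V hU hV)]
    refine integral_congr_ae (Filter.Eventually.of_forall fun z => ?_)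
    by_cases hz : z ∈ U
    · simp only [Set.indicator_of_mem hz]
      have hexp : (α z * V.indicator (fun _ => (1:ℝ)) (S z)
          + (1 - α z) * V.indicator (fun _ => (1:ℝ)) z) * π z
          = V.indicator (fun _ => (1:ℝ)) (S z) * (α z * π z)
            + V.indicator (fun _ => (1:ℝ)) z * (π z - α z * π z) := by ring
      rw [hexp, hm z]; ring
    · simp [Set.indicator_of_notMem hz]
  -- change of variables for the cross term
  have key : (∫ z, A.indicator (fun _ => (1:ℝ)) z *
        B.indicator (fun _ => (1:ℝ)) (S z) * m z)
      = ∫ z, B.indicator (fun _ => (1:ℝ)) z *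
          A.indicator (fun _ => (1:ℝ)) (S z) * m z := by
    have himg : S '' Set.univ = Set.univ := by
      rw [Set.image_univ]; exact hSsurj.range_eq
    have hcov := integral_image_eq_integral_abs_det_fderiv_smul
      (volume : Measure (EuclideanSpace ℝ (Fin d))) MeasurableSet.univ
      (fun x _ => (hSdiff x).hasFDerivAt.hasFDerivWithinAt)
      hSinj.injOn
      (fun z => A.indicator (fun _ => (1:ℝ)) z *
        B.indicator (fun _ => (1:ℝ)) (S z) * m z)
    rw [himg, setIntegral_univ, setIntegral_univ] at hcov
    rw [hcov]
    refine integral_congr_ae (Filter.Eventually.of_forall fun z => ?_)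
    simp only [smul_eq_mul, hinv z, ← hJ' z]
    calc J z * (A.indicator (fun _ => (1:ℝ)) (S z) *
          B.indicator (fun _ => (1:ℝ)) z * m (S z))
        = B.indicator (fun _ => (1:ℝ)) z *
            A.indicator (fun _ => (1:ℝ)) (S z) * (m (S z) * J z) := by ring
      _ = _ := by rw [hmJ z]
  rw [hrw A B hA hB, hrw B A hB hA, key]
  congr 1
  exact integral_congr_ae (Filter.Eventually.of_forall fun z => by ring)
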